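/- Let G be a strongly connected digraph with start vertex s and dominator tree D(s). If u and v are two distinct vertices with d^R(w) = s for w = u,v in G^R(s) and d(u) = d(v) = s in G(s), then u and v belong to a common vertex-resilient block containing s if and only if u and v lie in the same strongly connected component of G \ s. -/

import Mathlib

variable {V : Type*}

/-- Mutual reachability (strong connectivity of a pair) in the digraph `E`. -/
def SConn (E : V → V → Prop) (u v : V) : Prop :=
  Relation.ReflTransGen E u v ∧ Relation.ReflTransGen E v u

/-- The digraph obtained from `E` by deleting vertex `w` (and incident edges). -/
def delV (E : V → V → Prop) (w : V) : V → V → Prop :=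
  fun a b => E a b ∧ a ≠ w ∧ b ≠ w

/-- The digraph obtained from `E` by deleting the single edge `(a,b)`. -/
def delE (E : V → V → Prop) (a b : V) : V → V → Prop :=
  fun x y => E x y ∧ ¬(x = a ∧ y = b)

/-- `u` and `v` are vertex-resilient: they are distinct and remain strongly
connected after deletion of any single other vertex. -/
def VRes (E : V → V → Prop) (u v : V) : Prop :=
  u ≠ v ∧ ∀ w, w ≠ u → w ≠ v → SConn (delV E w) u v

/-- A vertex-resilient block: a maximal set of size ≥ 2 of pairwise
vertex-resilient vertices. -/
def IsVRBlock (E : V → V → Prop) (B : Set V) : Prop :=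
  B.Pairwise (VRes E) ∧ (∃ a ∈ B, ∃ b ∈ B, a ≠ b) ∧
    ∀ B' : Set V, B ⊆ B' → B'.Pairwise (VRes E) → B' = B

/-- `l` is (the vertex list of) a directed path from `u` to `v` in `E`. -/
def IsPathList (E : V → V → Prop) (u v : V) (l : List V) : Prop :=
  l.Chain' E ∧ l.head? = some u ∧ l.getLast? = some v

/-- The internal vertices of a path given as a vertex list. -/
def internalsL (l : List V) : List V := (l.drop 1).dropLast

/-- The edges of a path given as a vertex list. -/
def edgesOfL (l : List V) : List (V × V) := l.zip l.tail

/-- There exist two internally vertex-disjoint (simple, distinct) paths from `u` to `v`. -/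
def TwoVPaths (E : V → V → Prop) (u v : V) : Prop :=
  ∃ l₁ l₂ : List V, IsPathList E u v l₁ ∧ IsPathList E u v l₂ ∧
    l₁.Nodup ∧ l₂.Nodup ∧ l₁ ≠ l₂ ∧ ∀ x ∈ internalsL l₁, x ∉ internalsL l₂

/-- `u` and `v` are 2-vertex-connected. -/
def TwoVConn (E : V → V → Prop) (u v : V) : Prop :=
  u ≠ v ∧ TwoVPaths E u v ∧ TwoVPaths E v u

/-- There exist two edge-disjoint paths from `u` to `v`. -/
def TwoEPaths (E : V → V → Prop) (u v : V) : Prop :=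
  ∃ l₁ l₂ : List V, IsPathList E u v l₁ ∧ IsPathList E u v l₂ ∧
    ∀ e ∈ edgesOfL l₁, e ∉ edgesOfL l₂

/-- `u` and `v` are 2-edge-connected. -/
def TwoEConn (E : V → V → Prop) (u v : V) : Prop :=
  u ≠ v ∧ TwoEPaths E u v ∧ TwoEPaths E v u

/-- A 2-vertex-connected block. -/
def Is2VBlock (E : V → V → Prop) (B : Set V) : Prop :=
  B.Pairwise (TwoVConn E) ∧ (∃ a ∈ B, ∃ b ∈ B, a ≠ b) ∧
    ∀ B' : Set V, B ⊆ B' → B'.Pairwise (TwoVConn E) → B' = B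

/-- A 2-edge-connected block. -/
def Is2EBlock (E : V → V → Prop) (B : Set V) : Prop :=
  B.Pairwise (TwoEConn E) ∧ (∃ a ∈ B, ∃ b ∈ B, a ≠ b) ∧
    ∀ B' : Set V, B ⊆ B' → B'.Pairwise (TwoEConn E) → B' = B

/-- The digraph `E` is strongly connected. -/
def StronglyConn (E : V → V → Prop) : Prop :=
  ∀ u v, Relation.ReflTransGen E u v

/-- `(a,b)` is a strong bridge of the strongly connected digraph `E`. -/
def IsStrongBridge (E : V → V → Prop) (a b : V) : Prop :=
  E a b ∧ ¬ StronglyConn (delE E a b)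

/-- `u` dominates `w` in the flow graph with start vertex `s`:
every path from `s` to `w` contains `u`. -/
def DomOf (E : V → V → Prop) (s u w : V) : Prop :=
  ∀ l : List V, IsPathList E s w l → u ∈ l

/-- `d` is the immediate dominator of `w` in the flow graph with start `s`:
the proper dominator of `w` dominated by all proper dominators of `w`. -/
def IdomOf (E : V → V → Prop) (s d w : V) : Prop :=
  d ≠ w ∧ DomOf E s d w ∧ ∀ u, u ≠ w → DomOf E s u w → DomOf E s u d

/-- The block graph `F` of the digraph `E`: the bipartite undirected graph on the
vertices of `E` together with its vertex-resilient blocks, a vertex `u` being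
adjacent to a block node `B` exactly when `u ∈ B`. -/
def blockGraph (E : V → V → Prop) :
    SimpleGraph (V ⊕ {B : Set V // IsVRBlock E B}) where
  Adj a b := ∃ u B, u ∈ B.1 ∧
    ((a = Sum.inl u ∧ b = Sum.inr B) ∨ (a = Sum.inr B ∧ b = Sum.inl u))
  symm := by
    refine ⟨?_⟩
    rintro a b ⟨u, B, hm, (⟨rfl, rfl⟩ | ⟨rfl, rfl⟩)⟩
    · exact ⟨u, B, hm, Or.inr ⟨rfl, rfl⟩⟩
    · exact ⟨u, B, hm, Or.inl ⟨rfl, rfl⟩⟩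
  loopless := by
    refine ⟨?_⟩
    rintro a ⟨u, B, hm, (⟨rfl, h⟩ | ⟨rfl, h⟩)⟩ <;> simp at h

lemma rtg_of_pathlist {E : V → V → Prop} {w : V} :
    ∀ (l : List V), l.Chain' E → w ∉ l →
    ∀ a b, l.head? = some a → l.getLast? = some b →
    Relation.ReflTransGen (delV E w) a b
  | [] => by intro _ _ a b h _; simp at h
  | [x] => by
      intro _ _ a b ha hb
      simp only [List.head?_cons, Option.some.injEq] at ha
      simp only [List.getLast?_singleton, Option.some.injEq] at hb
      subst ha; subst hb; exact .refl
  | x :: y :: t => by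
      intro hc hw a b ha hb
      obtain ⟨hxy, hc'⟩ := List.isChain_cons_cons.mp hc
      simp only [List.head?_cons, Option.some.injEq] at ha
      subst ha
      have hb' : (y :: t).getLast? = some b := by
        rw [List.getLast?_cons_cons] at hb; exact hb
      have hx : x ≠ w := fun h => hw (h ▸ List.mem_cons_self)
      have hy : y ≠ w := fun h => hw (by simp [h])
      have ih := rtg_of_pathlist (y :: t) hc' (fun h => hw (List.mem_cons_of_mem _ h)) y b rfl hb'
      exact Relation.ReflTransGen.head ⟨hxy, hx, hy⟩ ih

lemma exists_avoid {E : V → V → Prop} {s x : V} (h : IdomOf E s s x)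
    {w : V} (hws : w ≠ s) (hwx : w ≠ x) :
    ∃ l : List V, IsPathList E s x l ∧ w ∉ l := by
  by_contra hcon
  push_neg at hcon
  have hdom : DomOf E s w x := fun l hl => hcon l hl
  have hds := h.2.2 w hwx hdom
  have hpath : IsPathList E s s [s] := ⟨List.isChain_singleton s, rfl, rfl⟩
  have hmem := hds [s] hpath
  simp at hmem
  exact hws hmem

lemma rtg_s_to {E : V → V → Prop} {s x : V} (h : IdomOf E s s x)
    {w : V} (hws : w ≠ s) (hwx : w ≠ x) :
    Relation.ReflTransGen (delV E w) s x := by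
  obtain ⟨l, ⟨hc, ha, hb⟩, hw⟩ := exists_avoid h hws hwx
  exact rtg_of_pathlist l hc hw s x ha hb

lemma rtg_to_s {E : V → V → Prop} {s x : V} (h : IdomOf (fun a b => E b a) s s x)
    {w : V} (hws : w ≠ s) (hwx : w ≠ x) :
    Relation.ReflTransGen (delV E w) x s := by
  obtain ⟨l, ⟨hc, ha, hb⟩, hw⟩ := exists_avoid h hws hwx
  have h1 : Relation.ReflTransGen (delV (fun a b => E b a) w) s x :=
    rtg_of_pathlist l hc hw s x ha hb
  have h2 : Relation.ReflTransGen (Function.swap (delV E w)) s x :=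
    Relation.ReflTransGen.mono (fun p q ⟨h1, h2, h3⟩ => ⟨h1, h3, h2⟩) _ _ h1
  exact Relation.reflTransGen_swap.mpr h2

lemma SConn.symm' {E : V → V → Prop} {a b : V} (h : SConn E a b) : SConn E b a :=
  ⟨h.2, h.1⟩

lemma VRes.symm' {E : V → V → Prop} {a b : V} (h : VRes E a b) : VRes E b a :=
  ⟨h.1.symm, fun w hw1 hw2 => (h.2 w hw2 hw1).symm'⟩

/-- if `u ≠ v` both have immediate dominator `s` in `G(s)` and in
`G^R(s)`, then `u` and `v` belong to a common vertex-resilient block containing `s`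
iff `u` and `v` lie in the same strongly connected component of `G \ s`. -/
theorem stmt12 (E : V → V → Prop) (s : V) (hsc : StronglyConn E)
    (u v : V) (huv : u ≠ v)
    (h1 : IdomOf E s s u) (h2 : IdomOf E s s v)
    (h1R : IdomOf (fun a b => E b a) s s u) (h2R : IdomOf (fun a b => E b a) s s v) :
    (∃ B : Set V, IsVRBlock E B ∧ s ∈ B ∧ u ∈ B ∧ v ∈ B) ↔ SConn (delV E s) u v := by
  constructor
  · rintro ⟨B, hB, hsB, huB, hvB⟩
    exact (hB.1 huB hvB huv).2 s h1.1 h2.1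
  · intro hsconn
    have hsu : VRes E s u := ⟨h1.1, fun w hws hwu =>
      ⟨rtg_s_to h1 hws hwu, rtg_to_s h1R hws hwu⟩⟩
    have hsv : VRes E s v := ⟨h2.1, fun w hws hwv =>
      ⟨rtg_s_to h2 hws hwv, rtg_to_s h2R hws hwv⟩⟩
    have huv' : VRes E u v := by
      refine ⟨huv, fun w hwu hwv => ?_⟩
      by_cases hws : w = s
      · subst hws; exact hsconn
      · exact ⟨(rtg_to_s h1R hws hwu).trans (rtg_s_to h2 hws hwv),
               (rtg_to_s h2R hws hwv).trans (rtg_s_to h1 hws hwu)⟩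
    have hpair : ({s, u, v} : Set V).Pairwise (VRes E) := by
      intro a ha b hb hab
      simp only [Set.mem_insert_iff, Set.mem_singleton_iff] at ha hb
      rcases ha with rfl | rfl | rfl <;> rcases hb with rfl | rfl | rfl <;>
        first
          | exact absurd rfl hab
          | exact hsu | exact hsv | exact huv'
          | exact hsu.symm' | exact hsv.symm' | exact huv'.symm'
    have hchain : ∀ c ⊆ {B : Set V | B.Pairwise (VRes E)}, IsChain (· ⊆ ·) c →
        c.Nonempty → ∃ ub ∈ {B : Set V | B.Pairwise (VRes E)}, ∀ t ∈ c, t ⊆ ub := by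
      intro c hcS hch _
      refine ⟨⋃₀ c, ?_, fun t ht => Set.subset_sUnion_of_mem ht⟩
      intro a ha b hb hab
      obtain ⟨A, hA, haA⟩ := ha
      obtain ⟨B', hB', hbB⟩ := hb
      rcases eq_or_ne A B' with rfl | hne
      · exact hcS hA haA hbB hab
      · rcases hch hA hB' hne with hsub | hsub
        · exact hcS hB' (hsub haA) hbB hab
        · exact hcS hA haA (hsub hbB) hab
    obtain ⟨M, hsubM, hMmax⟩ :=
      zorn_subset_nonempty {B : Set V | B.Pairwise (VRes E)} hchain _ hpair
    have hsM : s ∈ M := hsubM (by simp)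
    have huM : u ∈ M := hsubM (by simp)
    have hvM : v ∈ M := hsubM (by simp)
    refine ⟨M, ⟨hMmax.prop, ⟨s, hsM, u, huM, h1.1⟩, ?_⟩, hsM, huM, hvM⟩
    intro B' hMB' hB'pair
    exact Set.Subset.antisymm (hMmax.2 hB'pair hMB') hMB'
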